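/- Let (Q₀, Q₁, …, Q_k) be a sequence of dyadic cells with lev(Q_j) = lev(Q₀) + j, such that Q_{j−1} ⊆ N_{Q_j} for j = 1,…,k, and let Q' be a child of Q₀. Then dist(Q', Q_k) ≤ √d·(2p+1)·2^{−lev(Q')−1}·(1 + Σ_{j=1}^{k} 2^{−j+1}) < 3·√d·(2p+1)·2^{−lev(Q')−1}, where dist denotes the Euclidean distance between cell midpoints and lev(Q') = lev(Q₀)+1. -/

import Mathlib

noncomputable section

/-- The dyadic cell of level `ℓ` with index `m` in `ℝ^d`:
the hypercube `∏ᵢ [mᵢ/2^ℓ, (mᵢ+1)/2^ℓ]`. -/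
def dyadicCell (d : ℕ) (ℓ : ℤ) (m : Fin d → ℤ) : Set (Fin d → ℝ) :=
  Set.univ.pi fun i => Set.Icc ((m i : ℝ) / 2 ^ ℓ) (((m i : ℝ) + 1) / 2 ^ ℓ)

/-- The support of the tensor-product B-spline of degree `p`, level `ℓ`, index `k`:
the hypercube `∏ᵢ [kᵢ/2^ℓ, (kᵢ+p+1)/2^ℓ]`. -/
def bsupp (d p : ℕ) (ℓ : ℤ) (k : Fin d → ℤ) : Set (Fin d → ℝ) :=
  Set.univ.pi fun i => Set.Icc ((k i : ℝ) / 2 ^ ℓ) (((k i : ℝ) + p + 1) / 2 ^ ℓ)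

/-- The support extension `Q̂` of the level-`ℓ` cell of index `m`:
the cube of `(2p+1)^d` level-`ℓ` cells centered at the cell. -/
def hatQ (d p : ℕ) (ℓ : ℤ) (m : Fin d → ℤ) : Set (Fin d → ℝ) :=
  Set.univ.pi fun i => Set.Icc (((m i : ℝ) - p) / 2 ^ ℓ) (((m i : ℝ) + p + 1) / 2 ^ ℓ)

/-- The neighborhood `N_Q` of the level-`ℓ` cell of index `m`: the union of the
level-`(ℓ-1)` parents of all level-`ℓ` cells contained in the support extension `Q̂`. -/
def NQ (d p : ℕ) (ℓ : ℤ) (m : Fin d → ℤ) : Set (Fin d → ℝ) :=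
  ⋃ m' ∈ {m' : Fin d → ℤ | dyadicCell d ℓ m' ⊆ hatQ d p ℓ m},
    dyadicCell d (ℓ - 1) fun i => Int.ediv (m' i) 2

/-- The midpoint (barycenter) of the dyadic cell of level `ℓ` and index `m`,
as a point of Euclidean space. -/
def cellCenter (d : ℕ) (ℓ : ℤ) (m : Fin d → ℤ) : EuclideanSpace ℝ (Fin d) :=
  WithLp.toLp 2 fun i => ((m i : ℝ) + 1 / 2) / 2 ^ ℓ

namespace Aux

lemma tzp (ℓ : ℤ) : (0:ℝ) < 2 ^ ℓ := zpow_pos (by norm_num) ℓ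

lemma center_mem (d : ℕ) (ℓ : ℤ) (m : Fin d → ℤ) :
    (fun i => ((m i : ℝ) + 1/2) / 2 ^ ℓ) ∈ dyadicCell d ℓ m := by
  intro i _
  exact ⟨div_le_div_of_nonneg_right (by linarith) (tzp ℓ).le,
    div_le_div_of_nonneg_right (by linarith) (tzp ℓ).le⟩

/-- cancel denominators: a/2^ℓ ≤ b/2^ℓ ↔ a ≤ b -/
lemma div_le_div_cancel {a b : ℝ} (ℓ : ℤ) (h : a / 2^ℓ ≤ b / 2^ℓ) : a ≤ b :=
  (div_le_div_iff_of_pos_right (tzp ℓ)).mp h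

/-- a/2^ℓ = 2a/2^(ℓ+1) -/
lemma div_succ (a : ℝ) (ℓ : ℤ) : a / 2^ℓ = (2*a) / 2^(ℓ+1) := by
  rw [zpow_add_one₀ (by norm_num : (2:ℝ) ≠ 0)]
  field_simp

lemma abs_div_le {a c : ℝ} (ℓ : ℤ) (h : |a| ≤ c) : |a / 2^ℓ| ≤ c * 2^(-ℓ) := by
  rw [abs_div, abs_of_pos (tzp ℓ), div_eq_mul_inv, ← zpow_neg]
  exact mul_le_mul_of_nonneg_right h (by positivity)

lemma child_coord {d : ℕ} {ℓ : ℤ} {m' m0 : Fin d → ℤ}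
    (h : dyadicCell d (ℓ + 1) m' ⊆ dyadicCell d ℓ m0) (i : Fin d) :
    |((m' i : ℝ) + 1/2) / 2 ^ (ℓ+1) - ((m0 i : ℝ) + 1/2) / 2 ^ ℓ| ≤ 2 ^ (-(ℓ+1) - 1) := by
  obtain ⟨h1, h2⟩ := h (center_mem d (ℓ+1) m') i (Set.mem_univ i)
  rw [div_succ ((m0 i : ℝ)) ℓ] at h1
  rw [div_succ ((m0 i : ℝ) + 1) ℓ] at h2
  have h1' : 2*(m0 i : ℝ) ≤ (m' i : ℝ) + 1/2 := div_le_div_cancel _ h1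
  have h2' : (m' i : ℝ) + 1/2 ≤ 2*((m0 i : ℝ)+1) := div_le_div_cancel _ h2
  have e : ((m' i : ℝ) + 1/2) / 2 ^ (ℓ+1) - ((m0 i : ℝ) + 1/2) / 2 ^ ℓ
      = ((m' i : ℝ) - 2*(m0 i : ℝ) - 1/2) / 2^(ℓ+1) := by
    rw [div_succ ((m0 i : ℝ) + 1/2) ℓ, div_sub_div_same]
    ring_nf
  rw [e]
  have : (2:ℝ) ^ (-(ℓ+1) - 1) = (1/2) * 2^(-(ℓ+1)) := by
    rw [zpow_sub_one₀ (by norm_num : (2:ℝ) ≠ 0)]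
    ring
  rw [this, mul_comm]
  have hi1 : 2 * m0 i ≤ m' i := Int.lt_add_one_iff.mp (by exact_mod_cast (by push_cast; linarith : (2*(m0 i):ℝ) < (m' i : ℝ) + 1))
  have hi2 : m' i ≤ 2 * m0 i + 1 := Int.lt_add_one_iff.mp (by exact_mod_cast (by push_cast; linarith : ((m' i):ℝ) < 2*(m0 i : ℝ) + 1 + 1))
  have hr1 : (2*(m0 i):ℝ) ≤ (m' i : ℝ) := by exact_mod_cast hi1
  have hr2 : ((m' i):ℝ) ≤ 2*(m0 i : ℝ) + 1 := by exact_mod_cast hi2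
  exact abs_div_le _ (by rw [abs_le]; constructor <;> (push_cast; linarith))

lemma chain_coord {d p : ℕ} {ℓ : ℤ} {a M : Fin d → ℤ}
    (h : dyadicCell d (ℓ - 1) a ⊆ NQ d p ℓ M) (i : Fin d) :
    |((a i : ℝ) + 1/2)/2^(ℓ-1) - ((M i : ℝ)+1/2)/2^ℓ| ≤ (2*(p:ℝ)+1) * 2^(-ℓ-1) := by
  have hx := h (center_mem d (ℓ-1) a)
  rw [NQ, Set.mem_iUnion₂] at hx
  obtain ⟨μ, hμ, hxμ⟩ := hx
  -- identify the parent index with a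
  obtain ⟨hb1, hb2⟩ := hxμ i (Set.mem_univ i)
  have hb1' : ((μ i).ediv 2 : ℝ) ≤ (a i : ℝ) + 1/2 := div_le_div_cancel _ hb1
  have hb2' : (a i : ℝ) + 1/2 ≤ ((μ i).ediv 2 : ℝ) + 1 := div_le_div_cancel _ hb2
  have hba : (μ i).ediv 2 = a i := by
    have : ((μ i).ediv 2 : ℝ) ≤ a i + 1/2 := hb1'
    have h1 : (μ i).ediv 2 ≤ a i := Int.lt_add_one_iff.mp (by exact_mod_cast (by push_cast; linarith : ((μ i).ediv 2 : ℝ) < (a i : ℝ) + 1))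
    have h2 : a i ≤ (μ i).ediv 2 := Int.lt_add_one_iff.mp (by exact_mod_cast (by push_cast; linarith : (a i : ℝ) < ((μ i).ediv 2 : ℝ) + 1))
    omega
  -- bounds on μ i from hatQ
  obtain ⟨hc1, hc2⟩ := hμ (center_mem d ℓ μ) i (Set.mem_univ i)
  have hc1' : (M i : ℝ) - p ≤ (μ i : ℝ) + 1/2 := div_le_div_cancel _ hc1
  have hc2' : (μ i : ℝ) + 1/2 ≤ (M i : ℝ) + p + 1 := div_le_div_cancel _ hc2
  have hμ1 : (M i : ℤ) - p ≤ μ i := Int.lt_add_one_iff.mp (by exact_mod_cast (by push_cast; linarith : (M i : ℝ) - p < (μ i : ℝ) + 1))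
  have hμ2 : μ i ≤ (M i : ℤ) + p := Int.lt_add_one_iff.mp (by exact_mod_cast (by push_cast; linarith : (μ i : ℝ) < (M i : ℝ) + p + 1))
  -- 2 * a i vs μ i
  have hae : 2 * ((μ i).ediv 2) + (μ i) % 2 = μ i := Int.mul_ediv_add_emod (μ i) 2
  have hm0 : 0 ≤ (μ i) % 2 := Int.emod_nonneg _ (by norm_num)
  have hm1 : (μ i) % 2 < 2 := Int.emod_lt_of_pos _ (by norm_num)
  have ha1 : (μ i : ℤ) - 1 ≤ 2 * a i := by omega
  have ha2 : 2 * a i ≤ μ i := by omega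
  have hra1 : (M i : ℝ) - p - 1 ≤ 2 * (a i : ℝ) := by exact_mod_cast (by push_cast; omega : (M i : ℤ) - p - 1 ≤ 2 * a i)
  have hra2 : 2 * (a i : ℝ) ≤ (M i : ℝ) + p := by exact_mod_cast (by omega : 2 * a i ≤ (M i : ℤ) + p)
  have e : ((a i : ℝ) + 1/2)/2^(ℓ-1) - ((M i : ℝ)+1/2)/2^ℓ
      = (2*(a i : ℝ) - (M i : ℝ) + 1/2) / 2^ℓ := by
    have : (2:ℝ)^ℓ = 2^(ℓ-1) * 2 := by
      rw [← zpow_add_one₀ (by norm_num : (2:ℝ) ≠ 0)]; ring_nf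
    rw [this]
    field_simp
    ring
  have h3 : (2*(p:ℝ)+1) * 2^(-ℓ-1) = ((p:ℝ)+1/2) * 2^(-ℓ) := by
    rw [zpow_sub_one₀ (by norm_num : (2:ℝ) ≠ 0)]
    ring
  rw [e, h3]
  exact abs_div_le _ (by rw [abs_le]; constructor <;> linarith)

end Aux

namespace Aux2
open Aux

lemma geom_sum (k : ℕ) :
    ∑ j ∈ Finset.Icc 1 k, (2:ℝ)^(-(j:ℤ)+1) = 2 - 2^(-(k:ℤ)+1) := by
  induction k with
  | zero => simp
  | succ k ih =>
    rw [Finset.sum_Icc_succ_top (by omega : 1 ≤ k+1), ih]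
    have e1 : (((k+1:ℕ)):ℤ) = (k:ℤ)+1 := by push_cast; ring
    rw [e1]
    have ha : (2:ℝ)^(-((k:ℤ)+1)+1) = 2^(-(k:ℤ)+1) * 2⁻¹ := by
      rw [show -((k:ℤ)+1)+1 = (-(k:ℤ)+1)-1 by ring,
        zpow_sub_one₀ (by norm_num : (2:ℝ) ≠ 0)]
    rw [ha]; ring

lemma coord_bound {d p : ℕ} {ℓ0 : ℤ} {k : ℕ} {m : ℕ → Fin d → ℤ}
    (hchain : ∀ j : ℕ, 1 ≤ j → j ≤ k →
      dyadicCell d (ℓ0 + (j:ℤ) - 1) (m (j-1)) ⊆ NQ d p (ℓ0 + (j:ℤ)) (m j))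
    {m' : Fin d → ℤ} (hchild : dyadicCell d (ℓ0+1) m' ⊆ dyadicCell d ℓ0 (m 0)) :
    ∀ K, K ≤ k → ∀ i,
      |((m' i:ℝ)+1/2)/2^(ℓ0+1) - ((m K i:ℝ)+1/2)/2^(ℓ0+(K:ℤ))| ≤
        2^(-(ℓ0+1)-1) + (2*(p:ℝ)+1) * ∑ j ∈ Finset.Icc 1 K, (2:ℝ)^(-(ℓ0+(j:ℤ))-1) := by
  intro K
  induction K with
  | zero =>
    intro _ i
    simpa using child_coord hchild i
  | succ K ih =>
    intro hK i
    have hb1 := ih (by omega) i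
    have hch := hchain (K+1) (by omega) hK
    have e1 : (((K+1:ℕ)):ℤ) = (K:ℤ)+1 := by push_cast; ring
    rw [e1] at hch
    simp only [Nat.add_sub_cancel] at hch
    have hch' : dyadicCell d ((ℓ0 + (K:ℤ) + 1) - 1) (m K) ⊆
        NQ d p (ℓ0 + (K:ℤ) + 1) (m (K+1)) := by
      rw [show ℓ0 + ((K:ℤ)+1) = ℓ0 + (K:ℤ) + 1 from by ring] at hch
      exact hch
    have hc := chain_coord hch' i
    rw [show ℓ0 + (K:ℤ) + 1 - 1 = ℓ0 + (K:ℤ) from by ring] at hc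
    rw [e1, Finset.sum_Icc_succ_top (by omega : 1 ≤ K+1), e1]
    have tri : |((m' i:ℝ)+1/2)/2^(ℓ0+1) - ((m (K+1) i:ℝ)+1/2)/2^(ℓ0+((K:ℤ)+1))| ≤
        |((m' i:ℝ)+1/2)/2^(ℓ0+1) - ((m K i:ℝ)+1/2)/2^(ℓ0+(K:ℤ))| +
        |((m K i:ℝ)+1/2)/2^(ℓ0+(K:ℤ)) - ((m (K+1) i:ℝ)+1/2)/2^(ℓ0+((K:ℤ)+1))| :=
      abs_sub_le _ _ _
    rw [show ℓ0 + ((K:ℤ)+1) = ℓ0 + (K:ℤ) + 1 from by ring] at tri ⊢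
    rw [show -(ℓ0 + (K:ℤ) + 1) - 1 = -(ℓ0 + (K:ℤ) + 1) - 1 from rfl]
    calc |((m' i:ℝ)+1/2)/2^(ℓ0+1) - ((m (K+1) i:ℝ)+1/2)/2^(ℓ0+(K:ℤ)+1)| ≤
        |((m' i:ℝ)+1/2)/2^(ℓ0+1) - ((m K i:ℝ)+1/2)/2^(ℓ0+(K:ℤ))| +
        |((m K i:ℝ)+1/2)/2^(ℓ0+(K:ℤ)) - ((m (K+1) i:ℝ)+1/2)/2^(ℓ0+(K:ℤ)+1)| := tri
      _ ≤ (2^(-(ℓ0+1)-1) + (2*(p:ℝ)+1) * ∑ j ∈ Finset.Icc 1 K, (2:ℝ)^(-(ℓ0+(j:ℤ))-1))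
          + (2*(p:ℝ)+1) * 2^(-(ℓ0+(K:ℤ)+1)-1) := add_le_add hb1 hc
      _ = 2^(-(ℓ0+1)-1) + (2*(p:ℝ)+1) *
          ((∑ j ∈ Finset.Icc 1 K, (2:ℝ)^(-(ℓ0+(j:ℤ))-1)) + 2^(-(ℓ0+(K:ℤ)+1)-1)) := by ring

end Aux2


/-- Let `(Q₀, Q₁, …, Q_k)` be a sequence of dyadic cells with
`lev Q_j = lev Q₀ + j`, such that `Q_{j-1} ⊆ N_{Q_j}` for `j = 1, …, k`, and let `Q'`
be a child of `Q₀` (so `lev Q' = lev Q₀ + 1`). Then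
`dist(Q', Q_k) ≤ √d (2p+1) 2^{-lev Q' - 1} (1 + ∑_{j=1}^k 2^{-j+1})`, and this bound is
strictly less than `3 √d (2p+1) 2^{-lev Q' - 1}`, where `dist` is the Euclidean distance
between the cell midpoints. -/
theorem dist_child_to_chain (d p : ℕ) (hd : 0 < d) (hp : 1 ≤ p) (ℓ0 : ℤ) (k : ℕ)
    (m : ℕ → Fin d → ℤ)
    (hchain : ∀ j : ℕ, 1 ≤ j → j ≤ k →
      dyadicCell d (ℓ0 + (j : ℤ) - 1) (m (j - 1)) ⊆ NQ d p (ℓ0 + (j : ℤ)) (m j))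
    (m' : Fin d → ℤ)
    (hchild : dyadicCell d (ℓ0 + 1) m' ⊆ dyadicCell d ℓ0 (m 0)) :
    dist (cellCenter d (ℓ0 + 1) m') (cellCenter d (ℓ0 + (k : ℤ)) (m k)) ≤
        Real.sqrt d * (2 * p + 1) * 2 ^ (-(ℓ0 + 1) - 1) *
          (1 + ∑ j ∈ Finset.Icc 1 k, (2 : ℝ) ^ (-(j : ℤ) + 1)) ∧
      Real.sqrt d * (2 * p + 1) * 2 ^ (-(ℓ0 + 1) - 1) *
          (1 + ∑ j ∈ Finset.Icc 1 k, (2 : ℝ) ^ (-(j : ℤ) + 1)) <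
        3 * (Real.sqrt d * (2 * p + 1) * 2 ^ (-(ℓ0 + 1) - 1)) := by
  classical
  set S : ℝ := ∑ j ∈ Finset.Icc 1 k, (2 : ℝ) ^ (-(j : ℤ) + 1) with hSdef
  have hS0 : 0 ≤ S := Finset.sum_nonneg fun j _ => by positivity
  have hSeq : S = 2 - 2^(-(k:ℤ)+1) := Aux2.geom_sum k
  set B : ℝ := (2*(p:ℝ)+1) * 2^(-(ℓ0+1)-1) * (1+S) with hBdef
  have hB0 : 0 ≤ B := by
    rw [hBdef]
    have hp0 : (0:ℝ) ≤ p := Nat.cast_nonneg p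
    exact mul_nonneg (mul_nonneg (by linarith) (Aux.tzp _).le) (by linarith)
  have hsum : ∑ j ∈ Finset.Icc 1 k, (2:ℝ)^(-(ℓ0+(j:ℤ))-1) = 2^(-(ℓ0+1)-1) * S := by
    rw [hSdef, Finset.mul_sum]
    refine Finset.sum_congr rfl fun j _ => ?_
    rw [← zpow_add₀ (by norm_num : (2:ℝ) ≠ 0)]
    congr 1
    ring
  have hcoord : ∀ i, |cellCenter d (ℓ0+1) m' i - cellCenter d (ℓ0+(k:ℤ)) (m k) i| ≤ B := by
    intro i
    have h1 := Aux2.coord_bound hchain hchild k le_rfl i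
    rw [hsum] at h1
    have h2 : 2^(-(ℓ0+1)-1) + (2*(p:ℝ)+1) * (2^(-(ℓ0+1)-1) * S) ≤ B := by
      rw [hBdef]
      have := Aux.tzp (-(ℓ0+1)-1)
      have hp0 : (0:ℝ) ≤ p := Nat.cast_nonneg p
      nlinarith
    calc |cellCenter d (ℓ0+1) m' i - cellCenter d (ℓ0+(k:ℤ)) (m k) i|
        = |((m' i:ℝ)+1/2)/2^(ℓ0+1) - ((m k i:ℝ)+1/2)/2^(ℓ0+(k:ℤ))| := by
          rfl
      _ ≤ 2^(-(ℓ0+1)-1) + (2*(p:ℝ)+1) * (2^(-(ℓ0+1)-1) * S) := h1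
      _ ≤ B := h2
  have hdist : dist (cellCenter d (ℓ0 + 1) m') (cellCenter d (ℓ0 + (k : ℤ)) (m k)) ≤
      Real.sqrt d * B := by
    rw [EuclideanSpace.dist_eq]
    have h1 : ∑ i, dist (cellCenter d (ℓ0+1) m' i) (cellCenter d (ℓ0+(k:ℤ)) (m k) i)^2
        ≤ ∑ _i : Fin d, B^2 := by
      refine Finset.sum_le_sum fun i _ => ?_
      refine pow_le_pow_left₀ dist_nonneg ?_ 2
      rw [Real.dist_eq]
      exact hcoord i
    calc Real.sqrt (∑ i, dist (cellCenter d (ℓ0+1) m' i) (cellCenter d (ℓ0+(k:ℤ)) (m k) i)^2)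
        ≤ Real.sqrt (∑ _i : Fin d, B^2) := Real.sqrt_le_sqrt h1
      _ = Real.sqrt ((d:ℝ) * B^2) := by
          rw [Finset.sum_const, Finset.card_univ, Fintype.card_fin, nsmul_eq_mul]
      _ = Real.sqrt d * B := by
          rw [Real.sqrt_mul (Nat.cast_nonneg d), Real.sqrt_sq hB0]
  have hX : 0 < Real.sqrt d * (2*(p:ℝ)+1) * 2^(-(ℓ0+1)-1) := by
    have h1 : (0:ℝ) < Real.sqrt d := Real.sqrt_pos.mpr (by exact_mod_cast hd)
    have h2 : (0:ℝ) < 2*(p:ℝ)+1 := by positivity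
    exact mul_pos (mul_pos h1 h2) (Aux.tzp _)
  constructor
  · calc dist (cellCenter d (ℓ0 + 1) m') (cellCenter d (ℓ0 + (k : ℤ)) (m k))
        ≤ Real.sqrt d * B := hdist
      _ = Real.sqrt d * (2*(p:ℝ)+1) * 2^(-(ℓ0+1)-1) * (1+S) := by rw [hBdef]; ring
  · have hlt : 1 + S < 3 := by
      rw [hSeq]
      have := Aux.tzp (-(k:ℤ)+1)
      linarith
    calc Real.sqrt d * (2*(p:ℝ)+1) * 2^(-(ℓ0+1)-1) * (1+S)
        < Real.sqrt d * (2*(p:ℝ)+1) * 2^(-(ℓ0+1)-1) * 3 := by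
          exact mul_lt_mul_of_pos_left hlt hX
      _ = 3 * (Real.sqrt d * (2*(p:ℝ)+1) * 2^(-(ℓ0+1)-1)) := mul_comm _ _
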